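/- Let u : ℝ × [0,∞) → ℝ be continuous, 2π-periodic in the first variable x, harmonic on the open half-cylinder ℝ × (0,∞), with u(x,0) = 0 for all x. Then for every C¹ function ψ : ℝ × [0,∞) → ℝ that is 2π-periodic in x and vanishes for all y ≥ R (for some R > 0), the Caccioppoli-type inequality ∫_{(0,2π)×(0,∞)} |∇u|²·ψ² dx dy ≤ 4·∫_{(0,2π)×(0,∞)} |∇ψ|²·u² dx dy holds. -/

import Mathlib

open MeasureTheory Real

/-- Partial derivative in the first variable. -/
noncomputable def pX (u : ℝ × ℝ → ℝ) (p : ℝ × ℝ) : ℝ := deriv (fun t => u (t, p.2)) p.1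

/-- Partial derivative in the second variable. -/
noncomputable def pY (u : ℝ × ℝ → ℝ) (p : ℝ × ℝ) : ℝ := deriv (fun t => u (p.1, t)) p.2

/-- Second partial derivative in the first variable. -/
noncomputable def pXX (u : ℝ × ℝ → ℝ) (p : ℝ × ℝ) : ℝ := deriv (fun t => pX u (t, p.2)) p.1

/-- Second partial derivative in the second variable. -/
noncomputable def pYY (u : ℝ × ℝ → ℝ) (p : ℝ × ℝ) : ℝ := deriv (fun t => pY u (p.1, t)) p.2

namespace S9aux

noncomputable def Du (v : ℝ × ℝ → ℝ) : (ℝ × ℝ) → ((ℝ × ℝ) →L[ℝ] ℝ) := fderiv ℝ v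

noncomputable def DW (v : ℝ × ℝ → ℝ) : (ℝ × ℝ) → ((ℝ × ℝ) →L[ℝ] ℝ) :=
  fderivWithin ℝ v {q : ℝ × ℝ | 0 ≤ q.2}

noncomputable def a1 (v : ℝ × ℝ → ℝ) (p : ℝ × ℝ) : ℝ := Du v p (1, 0)
noncomputable def a2 (v : ℝ × ℝ → ℝ) (p : ℝ × ℝ) : ℝ := Du v p (0, 1)
noncomputable def b1 (v : ℝ × ℝ → ℝ) (p : ℝ × ℝ) : ℝ := DW v p (1, 0)
noncomputable def b2 (v : ℝ × ℝ → ℝ) (p : ℝ × ℝ) : ℝ := DW v p (0, 1)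
noncomputable def a11 (v : ℝ × ℝ → ℝ) (p : ℝ × ℝ) : ℝ := fderiv ℝ (a1 v) p (1, 0)
noncomputable def a22 (v : ℝ × ℝ → ℝ) (p : ℝ × ℝ) : ℝ := fderiv ℝ (a2 v) p (0, 1)

def Uo : Set (ℝ × ℝ) := {q : ℝ × ℝ | 0 < q.2}
def Ucl : Set (ℝ × ℝ) := {q : ℝ × ℝ | 0 ≤ q.2}

lemma isOpen_Uo : IsOpen Uo := isOpen_lt continuous_const continuous_snd

lemma Uo_subset_Ucl : Uo ⊆ Ucl := fun q hq => show (0:ℝ) ≤ q.2 from le_of_lt hq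

lemma Ucl_mem_nhds {p : ℝ × ℝ} (hp : p ∈ Uo) : Ucl ∈ nhds p :=
  Filter.mem_of_superset (isOpen_Uo.mem_nhds hp) Uo_subset_Ucl

lemma sliceX {v : ℝ × ℝ → ℝ} {L : ℝ × ℝ →L[ℝ] ℝ} {p : ℝ × ℝ} (h : HasFDerivAt v L p) :
    HasDerivAt (fun t => v (t, p.2)) (L (1, 0)) p.1 := by
  have h2 : HasDerivAt (fun t : ℝ => ((t, p.2) : ℝ × ℝ)) ((1 : ℝ), (0 : ℝ)) p.1 :=
    (hasDerivAt_id p.1).prodMk (hasDerivAt_const p.1 p.2)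
  have h' : HasFDerivAt v L ((p.1, p.2) : ℝ × ℝ) := by rw [Prod.mk.eta]; exact h
  exact h'.comp_hasDerivAt p.1 h2

lemma sliceY {v : ℝ × ℝ → ℝ} {L : ℝ × ℝ →L[ℝ] ℝ} {p : ℝ × ℝ} (h : HasFDerivAt v L p) :
    HasDerivAt (fun t => v (p.1, t)) (L (0, 1)) p.2 := by
  have h2 : HasDerivAt (fun t : ℝ => ((p.1, t) : ℝ × ℝ)) ((0 : ℝ), (1 : ℝ)) p.2 :=
    (hasDerivAt_const p.2 p.1).prodMk (hasDerivAt_id p.2)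
  have h' : HasFDerivAt v L ((p.1, p.2) : ℝ × ℝ) := by rw [Prod.mk.eta]; exact h
  exact h'.comp_hasDerivAt p.2 h2

section u

variable {u : ℝ × ℝ → ℝ}

lemma u_hasFDerivAt (hC2 : ContDiffOn ℝ 2 u Uo) {p : ℝ × ℝ} (hp : p ∈ Uo) :
    HasFDerivAt u (Du u p) p :=
  ((hC2.contDiffAt (isOpen_Uo.mem_nhds hp)).differentiableAt (by norm_num)).hasFDerivAt

lemma Du_contDiffOn (hC2 : ContDiffOn ℝ 2 u Uo) : ContDiffOn ℝ 1 (Du u) Uo :=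
  hC2.fderiv_of_isOpen isOpen_Uo (by norm_num)

lemma a1_contDiffOn (hC2 : ContDiffOn ℝ 2 u Uo) : ContDiffOn ℝ 1 (a1 u) Uo :=
  (Du_contDiffOn hC2).clm_apply contDiffOn_const

lemma a2_contDiffOn (hC2 : ContDiffOn ℝ 2 u Uo) : ContDiffOn ℝ 1 (a2 u) Uo :=
  (Du_contDiffOn hC2).clm_apply contDiffOn_const

lemma a1_hasFDerivAt (hC2 : ContDiffOn ℝ 2 u Uo) {p : ℝ × ℝ} (hp : p ∈ Uo) :
    HasFDerivAt (a1 u) (fderiv ℝ (a1 u) p) p :=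
  ((((a1_contDiffOn hC2).differentiableOn one_ne_zero) p hp).differentiableAt
    (isOpen_Uo.mem_nhds hp)).hasFDerivAt

lemma a2_hasFDerivAt (hC2 : ContDiffOn ℝ 2 u Uo) {p : ℝ × ℝ} (hp : p ∈ Uo) :
    HasFDerivAt (a2 u) (fderiv ℝ (a2 u) p) p :=
  ((((a2_contDiffOn hC2).differentiableOn one_ne_zero) p hp).differentiableAt
    (isOpen_Uo.mem_nhds hp)).hasFDerivAt

lemma a11_continuousOn (hC2 : ContDiffOn ℝ 2 u Uo) : ContinuousOn (a11 u) Uo :=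
  (((a1_contDiffOn hC2).continuousOn_fderiv_of_isOpen isOpen_Uo le_rfl).clm_apply
    continuousOn_const)

lemma a22_continuousOn (hC2 : ContDiffOn ℝ 2 u Uo) : ContinuousOn (a22 u) Uo :=
  (((a2_contDiffOn hC2).continuousOn_fderiv_of_isOpen isOpen_Uo le_rfl).clm_apply
    continuousOn_const)

lemma pX_eq (hC2 : ContDiffOn ℝ 2 u Uo) {p : ℝ × ℝ} (hp : p ∈ Uo) : pX u p = a1 u p :=
  (sliceX (u_hasFDerivAt hC2 hp)).deriv

lemma pY_eq (hC2 : ContDiffOn ℝ 2 u Uo) {p : ℝ × ℝ} (hp : p ∈ Uo) : pY u p = a2 u p :=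
  (sliceY (u_hasFDerivAt hC2 hp)).deriv

lemma pXX_eq (hC2 : ContDiffOn ℝ 2 u Uo) {p : ℝ × ℝ} (hp : p ∈ Uo) : pXX u p = a11 u p := by
  have hev : (fun t => pX u (t, p.2)) =ᶠ[nhds p.1] fun t => a1 u (t, p.2) :=
    Filter.Eventually.of_forall fun t => pX_eq hC2 (by exact hp : 0 < p.2)
  show deriv (fun t => pX u (t, p.2)) p.1 = a11 u p
  rw [hev.deriv_eq]
  exact (sliceX (a1_hasFDerivAt hC2 hp)).deriv

lemma pYY_eq (hC2 : ContDiffOn ℝ 2 u Uo) {p : ℝ × ℝ} (hp : p ∈ Uo) : pYY u p = a22 u p := by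
  have hmem : Set.Ioi (0 : ℝ) ∈ nhds p.2 := isOpen_Ioi.mem_nhds (by exact hp)
  have hev : (fun t => pY u (p.1, t)) =ᶠ[nhds p.2] fun t => a2 u (p.1, t) := by
    filter_upwards [hmem] with t ht
    exact pY_eq hC2 (by exact ht : ((p.1, t) : ℝ × ℝ) ∈ Uo)
  show deriv (fun t => pY u (p.1, t)) p.2 = a22 u p
  rw [hev.deriv_eq]
  exact (sliceY (a2_hasFDerivAt hC2 hp)).deriv

lemma Du_periodic (hC2 : ContDiffOn ℝ 2 u Uo) (hper : ∀ x y : ℝ, u (x + 2 * π, y) = u (x, y))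
    {p : ℝ × ℝ} (hp : p ∈ Uo) : Du u ((p.1 + 2 * π, p.2) : ℝ × ℝ) = Du u p := by
  have hp' : ((p.1 + 2 * π, p.2) : ℝ × ℝ) ∈ Uo := hp
  have htr : HasFDerivAt (fun q : ℝ × ℝ => q + ((2 * π : ℝ), (0 : ℝ)))
      (ContinuousLinearMap.id ℝ (ℝ × ℝ)) p := (hasFDerivAt_id p).add_const _
  have hgp : HasFDerivAt u (Du u ((p.1 + 2 * π, p.2) : ℝ × ℝ))
      ((fun q : ℝ × ℝ => q + ((2 * π : ℝ), (0 : ℝ))) p) := by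
    have heqp : ((fun q : ℝ × ℝ => q + ((2 * π : ℝ), (0 : ℝ))) p)
        = ((p.1 + 2 * π, p.2) : ℝ × ℝ) := by ext <;> simp
    rw [heqp]
    exact u_hasFDerivAt hC2 hp'
  have hcomp : HasFDerivAt (fun q : ℝ × ℝ => u (q + ((2 * π : ℝ), (0 : ℝ))))
      ((Du u ((p.1 + 2 * π, p.2) : ℝ × ℝ)).comp (ContinuousLinearMap.id ℝ (ℝ × ℝ))) p :=
    hgp.comp p htr
  have heq : (fun q : ℝ × ℝ => u (q + ((2 * π : ℝ), (0 : ℝ)))) = u := by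
    funext q
    have : q + ((2 * π : ℝ), (0 : ℝ)) = ((q.1 + 2 * π, q.2) : ℝ × ℝ) := by ext <;> simp
    rw [this, hper]
  rw [heq] at hcomp
  have := hcomp.unique (u_hasFDerivAt hC2 hp)
  rw [← this, ContinuousLinearMap.comp_id]

end u

section psi

variable {ψ : ℝ × ℝ → ℝ}

lemma Ucl_uniqueDiffOn : UniqueDiffOn ℝ Ucl := by
  apply uniqueDiffOn_convex
  · intro x hx y hy a b ha hb hab
    have : (a • x + b • y).2 = a * x.2 + b * y.2 := rfl
    simp only [Ucl, Set.mem_setOf_eq] at *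
    rw [this]
    have := mul_nonneg ha hx
    have := mul_nonneg hb hy
    linarith
  · refine ⟨((0 : ℝ), (1 : ℝ)), ?_⟩
    have : Uo ⊆ interior Ucl := isOpen_Uo.subset_interior_iff.mpr Uo_subset_Ucl
    exact this (by norm_num [Uo])

lemma psi_hasFDerivAt (hψ : ContDiffOn ℝ 1 ψ Ucl) {p : ℝ × ℝ} (hp : p ∈ Uo) :
    HasFDerivAt ψ (DW ψ p) p := by
  have h1 : HasFDerivAt ψ (fderiv ℝ ψ p) p :=
    ((hψ.contDiffAt (Ucl_mem_nhds hp)).differentiableAt one_ne_zero).hasFDerivAt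
  have : DW ψ p = fderiv ℝ ψ p := fderivWithin_of_mem_nhds (Ucl_mem_nhds hp)
  rw [this]; exact h1

lemma DW_continuousOn (hψ : ContDiffOn ℝ 1 ψ Ucl) : ContinuousOn (DW ψ) Ucl :=
  hψ.continuousOn_fderivWithin Ucl_uniqueDiffOn le_rfl

lemma b1_continuousOn (hψ : ContDiffOn ℝ 1 ψ Ucl) : ContinuousOn (b1 ψ) Ucl :=
  (DW_continuousOn hψ).clm_apply continuousOn_const

lemma b2_continuousOn (hψ : ContDiffOn ℝ 1 ψ Ucl) : ContinuousOn (b2 ψ) Ucl :=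
  (DW_continuousOn hψ).clm_apply continuousOn_const

lemma pXpsi_eq (hψ : ContDiffOn ℝ 1 ψ Ucl) {p : ℝ × ℝ} (hp : p ∈ Uo) : pX ψ p = b1 ψ p :=
  (sliceX (psi_hasFDerivAt hψ hp)).deriv

lemma pYpsi_eq (hψ : ContDiffOn ℝ 1 ψ Ucl) {p : ℝ × ℝ} (hp : p ∈ Uo) : pY ψ p = b2 ψ p :=
  (sliceY (psi_hasFDerivAt hψ hp)).deriv

end psi

lemma box_ae (a b c d : ℝ) :
    (Set.Icc a b ×ˢ Set.Icc c d : Set (ℝ × ℝ)) =ᵐ[volume] (Set.Ioo a b ×ˢ Set.Ioo c d) := by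
  rw [MeasureTheory.ae_eq_set]
  constructor
  · apply measure_mono_null
      (show (Set.Icc a b ×ˢ Set.Icc c d : Set (ℝ × ℝ)) \ (Set.Ioo a b ×ˢ Set.Ioo c d) ⊆
        (({a, b} : Set ℝ) ×ˢ (Set.univ : Set ℝ)) ∪ ((Set.univ : Set ℝ) ×ˢ ({c, d} : Set ℝ))
        from ?_)
    · apply measure_union_null
      · rw [MeasureTheory.Measure.volume_eq_prod, Measure.prod_prod]
        have : volume ({a, b} : Set ℝ) = 0 := Set.Countable.measure_zero (by simp) _
        simp [this]
      · rw [MeasureTheory.Measure.volume_eq_prod, Measure.prod_prod]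
        have : volume ({c, d} : Set ℝ) = 0 := Set.Countable.measure_zero (by simp) _
        simp [this]
    · rintro ⟨x, y⟩ ⟨⟨⟨hax, hxb⟩, ⟨hcy, hyd⟩⟩, hn⟩
      rcases eq_or_lt_of_le hax with h | h
      · exact Or.inl ⟨Or.inl h.symm, trivial⟩
      rcases eq_or_lt_of_le hxb with h' | h'
      · exact Or.inl ⟨Or.inr h', trivial⟩
      rcases eq_or_lt_of_le hcy with h2 | h2
      · exact Or.inr ⟨trivial, Or.inl h2.symm⟩
      rcases eq_or_lt_of_le hyd with h2' | h2'
      · exact Or.inr ⟨trivial, Or.inr h2'⟩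
      exact absurd ⟨⟨h, h'⟩, ⟨h2, h2'⟩⟩ hn
  · apply measure_mono_null
      (show (Set.Ioo a b ×ˢ Set.Ioo c d : Set (ℝ × ℝ)) \ (Set.Icc a b ×ˢ Set.Icc c d) ⊆ ∅
        from ?_)
    · simp
    · rw [Set.diff_eq_empty.mpr (Set.prod_mono Set.Ioo_subset_Icc_self Set.Ioo_subset_Icc_self)]


section main

variable (u ψ : ℝ × ℝ → ℝ)

noncomputable def PP (p : ℝ × ℝ) : ℝ := (ψ p * ψ p) * (a1 u p * a1 u p + a2 u p * a2 u p)
noncomputable def QQ (p : ℝ × ℝ) : ℝ :=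
  2 * (u p * ψ p) * (b1 ψ p * a1 u p + b2 ψ p * a2 u p)
noncomputable def WW (p : ℝ × ℝ) : ℝ := (u p * u p) * (b1 ψ p * b1 ψ p + b2 ψ p * b2 ψ p)
noncomputable def HH (p : ℝ × ℝ) : ℝ :=
  (u p * u p) * (ψ p * b2 ψ p + ψ p * b2 ψ p) + (ψ p * ψ p) * (u p * a2 u p + u p * a2 u p)
noncomputable def KK (p : ℝ × ℝ) : ℝ := (u p * u p) * (ψ p * b2 ψ p + ψ p * b2 ψ p)
noncomputable def GG (p : ℝ × ℝ) : ℝ := (u p * (ψ p * ψ p)) * a2 u p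
noncomputable def Ff (p : ℝ × ℝ) : ℝ := (u p * (ψ p * ψ p)) * a1 u p
noncomputable def Bfun (t : ℝ) : ℝ := ∫ x in Set.Icc (0:ℝ) (2*π), GG u ψ (x, t)
noncomputable def kfun (t : ℝ) : ℝ := ∫ x in Set.Icc (0:ℝ) (2*π), KK u ψ (x, t)
noncomputable def Ffun (t : ℝ) : ℝ := ∫ x in Set.Icc (0:ℝ) (2*π), HH u ψ (x, t)
noncomputable def phif (t : ℝ) : ℝ :=
  ∫ x in Set.Icc (0:ℝ) (2*π), (u (x, t) * u (x, t)) * (ψ (x, t) * ψ (x, t))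

variable {u ψ}

lemma ucont (hC2 : ContDiffOn ℝ 2 u Uo) : ContinuousOn u Uo := hC2.continuousOn
lemma psicont (hψC1 : ContDiffOn ℝ 1 ψ Ucl) : ContinuousOn ψ Uo :=
  hψC1.continuousOn.mono Uo_subset_Ucl
lemma a1cont (hC2 : ContDiffOn ℝ 2 u Uo) : ContinuousOn (a1 u) Uo :=
  (a1_contDiffOn hC2).continuousOn
lemma a2cont (hC2 : ContDiffOn ℝ 2 u Uo) : ContinuousOn (a2 u) Uo :=
  (a2_contDiffOn hC2).continuousOn
lemma b1cont (hψC1 : ContDiffOn ℝ 1 ψ Ucl) : ContinuousOn (b1 ψ) Uo :=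
  (b1_continuousOn hψC1).mono Uo_subset_Ucl
lemma b2cont (hψC1 : ContDiffOn ℝ 1 ψ Ucl) : ContinuousOn (b2 ψ) Uo :=
  (b2_continuousOn hψC1).mono Uo_subset_Ucl

lemma PPcont (hC2 : ContDiffOn ℝ 2 u Uo) (hψC1 : ContDiffOn ℝ 1 ψ Ucl) :
    ContinuousOn (PP u ψ) Uo :=
  ((psicont hψC1).mul (psicont hψC1)).mul
    (((a1cont hC2).mul (a1cont hC2)).add ((a2cont hC2).mul (a2cont hC2)))

lemma QQcont (hC2 : ContDiffOn ℝ 2 u Uo) (hψC1 : ContDiffOn ℝ 1 ψ Ucl) :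
    ContinuousOn (QQ u ψ) Uo :=
  ((continuousOn_const.mul ((ucont hC2).mul (psicont hψC1)))).mul
    (((b1cont hψC1).mul (a1cont hC2)).add ((b2cont hψC1).mul (a2cont hC2)))

lemma HHcont (hC2 : ContDiffOn ℝ 2 u Uo) (hψC1 : ContDiffOn ℝ 1 ψ Ucl) :
    ContinuousOn (HH u ψ) Uo :=
  (((ucont hC2).mul (ucont hC2)).mul
      (((psicont hψC1).mul (b2cont hψC1)).add ((psicont hψC1).mul (b2cont hψC1)))).add
    (((psicont hψC1).mul (psicont hψC1)).mul
      (((ucont hC2).mul (a2cont hC2)).add ((ucont hC2).mul (a2cont hC2))))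

lemma WWcontUcl (hψC1 : ContDiffOn ℝ 1 ψ Ucl) (hcont : ContinuousOn u Ucl) :
    ContinuousOn (WW u ψ) Ucl :=
  (hcont.mul hcont).mul
    (((b1_continuousOn hψC1).mul (b1_continuousOn hψC1)).add
      ((b2_continuousOn hψC1).mul (b2_continuousOn hψC1)))

lemma box_subset_Uo {ε R : ℝ} (hε : 0 < ε) :
    Set.Icc ((0:ℝ), ε) ((2*π : ℝ), R) ⊆ Uo := fun p hp =>
  show 0 < p.2 from lt_of_lt_of_le hε hp.1.2

lemma div1 (hC2 : ContDiffOn ℝ 2 u Uo) (hper : ∀ x y : ℝ, u (x + 2 * π, y) = u (x, y))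
    (hharm : ∀ p : ℝ × ℝ, 0 < p.2 → pXX u p + pYY u p = 0)
    (hψC1 : ContDiffOn ℝ 1 ψ Ucl) (hψper : ∀ x y : ℝ, ψ (x + 2 * π, y) = ψ (x, y)) {R : ℝ}
    (hψ0 : ∀ p : ℝ × ℝ, R ≤ p.2 → ψ p = 0) {ε : ℝ} (hε : 0 < ε) (hεR : ε < R) :
    ∫ p in Set.Icc ((0:ℝ), ε) ((2*π : ℝ), R), (PP u ψ p + QQ u ψ p) = -(Bfun u ψ ε) := by
  have hsubbox := box_subset_Uo (R := R) hε
  set F' : (ℝ × ℝ) → ((ℝ × ℝ) →L[ℝ] ℝ) := fun p =>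
    (u p * (ψ p * ψ p)) • fderiv ℝ (a1 u) p +
      a1 u p • (u p • (ψ p • DW ψ p + ψ p • DW ψ p) + (ψ p * ψ p) • Du u p) with hF'
  set G' : (ℝ × ℝ) → ((ℝ × ℝ) →L[ℝ] ℝ) := fun p =>
    (u p * (ψ p * ψ p)) • fderiv ℝ (a2 u) p +
      a2 u p • (u p • (ψ p • DW ψ p + ψ p • DW ψ p) + (ψ p * ψ p) • Du u p) with hG'
  have hval : ∀ p ∈ Uo, F' p (1, 0) + G' p (0, 1) =
      PP u ψ p + QQ u ψ p + (u p * (ψ p * ψ p)) * (a11 u p + a22 u p) := by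
    intro p hp
    simp only [hF', hG', ContinuousLinearMap.add_apply, ContinuousLinearMap.coe_smul',
      Pi.smul_apply, smul_eq_mul, PP, QQ, a1, a2, a11, a22, b1, b2]
    ring
  have hharm' : ∀ p ∈ Uo, a11 u p + a22 u p = 0 := by
    intro p hp
    rw [← pXX_eq hC2 hp, ← pYY_eq hC2 hp]
    exact hharm p hp
  have hdivcont : ContinuousOn (fun p => PP u ψ p + QQ u ψ p +
      (u p * (ψ p * ψ p)) * (a11 u p + a22 u p)) Uo :=
    ((PPcont hC2 hψC1).add (QQcont hC2 hψC1)).add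
      (((ucont hC2).mul ((psicont hψC1).mul (psicont hψC1))).mul
        ((a11_continuousOn hC2).add (a22_continuousOn hC2)))
  have Hi : IntegrableOn (fun p => F' p (1, 0) + G' p (0, 1))
      (Set.Icc ((0:ℝ), ε) ((2*π : ℝ), R)) volume := by
    refine (((hdivcont.mono hsubbox).integrableOn_compact isCompact_Icc).congr_fun ?_
      measurableSet_Icc)
    intro p hp
    exact (hval p (hsubbox hp)).symm
  have hle : ((0:ℝ), ε) ≤ ((2*π : ℝ), R) :=
    Prod.mk_le_mk.mpr ⟨by positivity, le_of_lt hεR⟩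
  have hdiv := integral_divergence_prod_Icc_of_hasFDerivAt_off_countable_of_le
    (Ff u ψ) (GG u ψ) F' G' ((0:ℝ), ε) ((2*π : ℝ), R) hle ∅ Set.countable_empty
    (by
      show ContinuousOn (Ff u ψ) _
      have : ContinuousOn (Ff u ψ) Uo :=
        ((ucont hC2).mul ((psicont hψC1).mul (psicont hψC1))).mul (a1cont hC2)
      exact this.mono hsubbox)
    (by
      have : ContinuousOn (GG u ψ) Uo :=
        ((ucont hC2).mul ((psicont hψC1).mul (psicont hψC1))).mul (a2cont hC2)
      exact this.mono hsubbox)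
    (by
      rintro p ⟨hp, -⟩
      have hpU : p ∈ Uo := lt_trans hε hp.2.1
      exact ((u_hasFDerivAt hC2 hpU).mul
        ((psi_hasFDerivAt hψC1 hpU).mul (psi_hasFDerivAt hψC1 hpU))).mul
        (a1_hasFDerivAt hC2 hpU))
    (by
      rintro p ⟨hp, -⟩
      have hpU : p ∈ Uo := lt_trans hε hp.2.1
      exact ((u_hasFDerivAt hC2 hpU).mul
        ((psi_hasFDerivAt hψC1 hpU).mul (psi_hasFDerivAt hψC1 hpU))).mul
        (a2_hasFDerivAt hC2 hpU))
    Hi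
  have hLHS : ∫ p in Set.Icc ((0:ℝ), ε) ((2*π : ℝ), R), (F' p (1, 0) + G' p (0, 1)) =
      ∫ p in Set.Icc ((0:ℝ), ε) ((2*π : ℝ), R), (PP u ψ p + QQ u ψ p) := by
    apply setIntegral_congr_fun measurableSet_Icc
    intro p hp
    have hpU := hsubbox hp
    show F' p (1, 0) + G' p (0, 1) = PP u ψ p + QQ u ψ p
    rw [hval p hpU, hharm' p hpU, mul_zero, add_zero]
  have htop : (∫ x in (0:ℝ)..(2*π), GG u ψ (x, R)) = 0 := by
    have : (fun x => GG u ψ (x, R)) = fun _ => (0:ℝ) := by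
      funext x
      simp [GG, hψ0 (x, R) le_rfl]
    rw [this]
    simp
  have hbot : (∫ x in (0:ℝ)..(2*π), GG u ψ (x, ε)) = Bfun u ψ ε := by
    rw [intervalIntegral.integral_of_le (by positivity), Bfun,
      setIntegral_congr_set Ioc_ae_eq_Icc]
  have hper2π : ∀ y : ℝ, 0 < y → Ff u ψ ((2*π : ℝ), y) = Ff u ψ ((0:ℝ), y) := by
    intro y hy
    have hyU : ((0:ℝ), y) ∈ Uo := hy
    have hDup := Du_periodic hC2 hper (p := ((0:ℝ), y)) hyU
    have ha1 : a1 u ((2*π : ℝ), y) = a1 u ((0:ℝ), y) := by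
      have := congrArg (fun L : (ℝ × ℝ) →L[ℝ] ℝ => L ((1:ℝ), (0:ℝ))) hDup
      simpa [a1] using this
    have hu' : u ((2*π : ℝ), y) = u ((0:ℝ), y) := by simpa using hper 0 y
    have hψ' : ψ ((2*π : ℝ), y) = ψ ((0:ℝ), y) := by simpa using hψper 0 y
    simp only [Ff]
    rw [hu', hψ', ha1]
  have hfper : (∫ y in ε..R, Ff u ψ (((2*π : ℝ), R).1, y)) =
      ∫ y in ε..R, Ff u ψ (((0:ℝ), ε).1, y) := by
    apply intervalIntegral.integral_congr
    intro y hy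
    rw [Set.uIcc_of_le hεR.le] at hy
    exact hper2π y (lt_of_lt_of_le hε hy.1)
  rw [← hLHS, hdiv, hfper]
  have htop' : (∫ x in ((0:ℝ),ε).1..((2*π : ℝ), R).1, GG u ψ (x, ((2*π : ℝ), R).2)) = 0 := htop
  have hbot' : (∫ x in ((0:ℝ),ε).1..((2*π : ℝ), R).1, GG u ψ (x, ((0:ℝ), ε).2)) =
      Bfun u ψ ε := hbot
  rw [htop', hbot']
  ring

lemma div2 (hC2 : ContDiffOn ℝ 2 u Uo) (hψC1 : ContDiffOn ℝ 1 ψ Ucl)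
    {ε d : ℝ} (hε : 0 < ε) (hεd : ε < d) :
    ∫ p in Set.Icc ((0:ℝ), ε) ((2*π : ℝ), d), HH u ψ p = phif u ψ d - phif u ψ ε := by
  have hsubbox := box_subset_Uo (R := d) hε
  set G' : (ℝ × ℝ) → ((ℝ × ℝ) →L[ℝ] ℝ) := fun p =>
    (u p * u p) • (ψ p • DW ψ p + ψ p • DW ψ p) +
      (ψ p * ψ p) • (u p • Du u p + u p • Du u p) with hG'
  have hval : ∀ p ∈ Uo, (0 : (ℝ × ℝ) →L[ℝ] ℝ) (1, 0) + G' p (0, 1) = HH u ψ p := by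
    intro p hp
    simp only [hG', ContinuousLinearMap.add_apply, ContinuousLinearMap.coe_smul',
      Pi.smul_apply, smul_eq_mul, HH, a2, b2, ContinuousLinearMap.zero_apply]
    ring
  have Hi : IntegrableOn (fun p => (0 : (ℝ × ℝ) →L[ℝ] ℝ) (1, 0) + G' p (0, 1))
      (Set.Icc ((0:ℝ), ε) ((2*π : ℝ), d)) volume := by
    refine ((((HHcont hC2 hψC1).mono hsubbox).integrableOn_compact isCompact_Icc).congr_fun ?_
      measurableSet_Icc)
    intro p hp
    exact (hval p (hsubbox hp)).symm
  have hle : ((0:ℝ), ε) ≤ ((2*π : ℝ), d) :=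
    Prod.mk_le_mk.mpr ⟨by positivity, le_of_lt hεd⟩
  have hdiv := integral_divergence_prod_Icc_of_hasFDerivAt_off_countable_of_le
    (fun _ => (0:ℝ)) (fun p => (u p * u p) * (ψ p * ψ p)) (fun _ => 0) G'
    ((0:ℝ), ε) ((2*π : ℝ), d) hle ∅ Set.countable_empty
    continuousOn_const
    (by
      have : ContinuousOn (fun p => (u p * u p) * (ψ p * ψ p)) Uo :=
        ((ucont hC2).mul (ucont hC2)).mul ((psicont hψC1).mul (psicont hψC1))
      exact this.mono hsubbox)
    (fun p _ => hasFDerivAt_const 0 p)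
    (by
      rintro p ⟨hp, -⟩
      have hpU : p ∈ Uo := lt_trans hε hp.2.1
      exact ((u_hasFDerivAt hC2 hpU).mul (u_hasFDerivAt hC2 hpU)).mul
        ((psi_hasFDerivAt hψC1 hpU).mul (psi_hasFDerivAt hψC1 hpU)))
    Hi
  have hLHS : ∫ p in Set.Icc ((0:ℝ), ε) ((2*π : ℝ), d),
      ((0 : (ℝ × ℝ) →L[ℝ] ℝ) (1, 0) + G' p (0, 1)) =
      ∫ p in Set.Icc ((0:ℝ), ε) ((2*π : ℝ), d), HH u ψ p := by
    apply setIntegral_congr_fun measurableSet_Icc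
    intro p hp
    exact hval p (hsubbox hp)
  have htop : (∫ x in ((0:ℝ),ε).1..((2*π : ℝ), d).1,
      (u (x, ((2*π : ℝ), d).2) * u (x, ((2*π : ℝ), d).2)) *
        (ψ (x, ((2*π : ℝ), d).2) * ψ (x, ((2*π : ℝ), d).2))) = phif u ψ d := by
    show (∫ x in (0:ℝ)..(2*π), (u (x, d) * u (x, d)) * (ψ (x, d) * ψ (x, d))) = _
    rw [intervalIntegral.integral_of_le (by positivity), phif,
      setIntegral_congr_set Ioc_ae_eq_Icc]
  have hbot : (∫ x in ((0:ℝ),ε).1..((2*π : ℝ), d).1,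
      (u (x, ((0:ℝ), ε).2) * u (x, ((0:ℝ), ε).2)) *
        (ψ (x, ((0:ℝ), ε).2) * ψ (x, ((0:ℝ), ε).2))) = phif u ψ ε := by
    show (∫ x in (0:ℝ)..(2*π), (u (x, ε) * u (x, ε)) * (ψ (x, ε) * ψ (x, ε))) = _
    rw [intervalIntegral.integral_of_le (by positivity), phif,
      setIntegral_congr_set Ioc_ae_eq_Icc]
  rw [← hLHS, hdiv, htop, hbot]
  simp

lemma HHIntegrableBox (hC2 : ContDiffOn ℝ 2 u Uo) (hψC1 : ContDiffOn ℝ 1 ψ Ucl)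
    {ε d : ℝ} (hε : 0 < ε) :
    IntegrableOn (HH u ψ) (Set.Icc (0:ℝ) (2*π) ×ˢ Set.Icc ε d) volume := by
  have hsub : (Set.Icc (0:ℝ) (2*π) ×ˢ Set.Icc ε d : Set (ℝ × ℝ)) ⊆ Uo := fun p hp =>
    show 0 < p.2 from lt_of_lt_of_le hε hp.2.1
  exact ((HHcont hC2 hψC1).mono hsub).integrableOn_compact
    (isCompact_Icc.prod isCompact_Icc)

lemma fub (hC2 : ContDiffOn ℝ 2 u Uo) (hψC1 : ContDiffOn ℝ 1 ψ Ucl)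
    {ε d : ℝ} (hε : 0 < ε) :
    ∫ p in Set.Icc ((0:ℝ), ε) ((2*π : ℝ), d), HH u ψ p = ∫ y in Set.Icc ε d, Ffun u ψ y := by
  have h1 := HHIntegrableBox hC2 hψC1 (ε := ε) (d := d) hε
  have hprodmeas : (volume : Measure (ℝ × ℝ)) = (volume : Measure ℝ).prod volume :=
    MeasureTheory.Measure.volume_eq_prod ℝ ℝ
  have h2 : Integrable (HH u ψ)
      (((volume : Measure ℝ).restrict (Set.Icc (0:ℝ) (2*π))).prod
        ((volume : Measure ℝ).restrict (Set.Icc ε d))) := by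
    rw [Measure.prod_restrict]
    rw [IntegrableOn, hprodmeas] at h1
    exact h1
  have h3 : Integrable (Function.uncurry fun x y => HH u ψ (x, y))
      (((volume : Measure ℝ).restrict (Set.Icc (0:ℝ) (2*π))).prod
        ((volume : Measure ℝ).restrict (Set.Icc ε d))) := by
    apply h2.congr
    filter_upwards with p
    simp [Function.uncurry]
  calc ∫ p in Set.Icc ((0:ℝ), ε) ((2*π : ℝ), d), HH u ψ p
      = ∫ p in Set.Icc (0:ℝ) (2*π) ×ˢ Set.Icc ε d, HH u ψ p := by
        rw [Set.Icc_prod_eq]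
    _ = ∫ p, HH u ψ p ∂(((volume : Measure ℝ).restrict (Set.Icc (0:ℝ) (2*π))).prod
        ((volume : Measure ℝ).restrict (Set.Icc ε d))) := by
        rw [Measure.prod_restrict, ← hprodmeas]
    _ = ∫ x, ∫ y, HH u ψ (x, y)
          ∂((volume : Measure ℝ).restrict (Set.Icc ε d))
          ∂((volume : Measure ℝ).restrict (Set.Icc (0:ℝ) (2*π))) := integral_prod _ h2
    _ = ∫ y, ∫ x, HH u ψ (x, y)
          ∂((volume : Measure ℝ).restrict (Set.Icc (0:ℝ) (2*π)))
          ∂((volume : Measure ℝ).restrict (Set.Icc ε d)) := integral_integral_swap h3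
    _ = ∫ y in Set.Icc ε d, Ffun u ψ y := rfl

lemma FfunIntegrable (hC2 : ContDiffOn ℝ 2 u Uo) (hψC1 : ContDiffOn ℝ 1 ψ Ucl)
    {ε d : ℝ} (hε : 0 < ε) :
    IntegrableOn (Ffun u ψ) (Set.Icc ε d) volume := by
  have h1 := HHIntegrableBox hC2 hψC1 (ε := ε) (d := d) hε
  have h2 : Integrable (HH u ψ)
      (((volume : Measure ℝ).restrict (Set.Icc (0:ℝ) (2*π))).prod
        ((volume : Measure ℝ).restrict (Set.Icc ε d))) := by
    rw [Measure.prod_restrict]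
    rw [IntegrableOn, MeasureTheory.Measure.volume_eq_prod ℝ ℝ] at h1
    exact h1
  exact h2.integral_prod_right

lemma sliceCont {v : ℝ × ℝ → ℝ} (hv : ContinuousOn v Ucl) {t : ℝ} (ht : 0 ≤ t) :
    Continuous (fun x => v (x, t)) := by
  have := hv.comp_continuous (continuous_id.prodMk (continuous_const : Continuous fun _ : ℝ => t))
    (fun x => by exact ht)
  exact this

lemma sliceContUo {v : ℝ × ℝ → ℝ} (hv : ContinuousOn v Uo) {t : ℝ} (ht : 0 < t) :
    Continuous (fun x => v (x, t)) := by
  have := hv.comp_continuous (continuous_id.prodMk (continuous_const : Continuous fun _ : ℝ => t))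
    (fun x => by exact ht)
  exact this

lemma sliceTendsto {v : ℝ × ℝ → ℝ} (hv : ContinuousOn v Ucl) (x : ℝ) :
    Filter.Tendsto (fun t => v (x, t)) (nhdsWithin 0 (Set.Ioi 0)) (nhds (v (x, 0))) := by
  have h1 : ContinuousWithinAt (fun t => v (x, t)) (Set.Ici 0) 0 := by
    have hmaps : Set.MapsTo (fun t : ℝ => ((x, t) : ℝ × ℝ)) (Set.Ici 0) Ucl := fun t ht => ht
    exact (hv ((x, 0) : ℝ × ℝ) (by simp [Ucl, Set.mem_setOf_eq])).comp
      ((continuous_const.prodMk continuous_id).continuousWithinAt) hmaps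
  exact h1.tendsto.mono_left (nhdsWithin_mono 0 Set.Ioi_subset_Ici_self)

lemma phif_nonneg (t : ℝ) : 0 ≤ phif u ψ t := by
  apply setIntegral_nonneg measurableSet_Icc
  intro x _
  exact mul_nonneg (mul_self_nonneg _) (mul_self_nonneg _)

lemma Kbounds {v : ℝ × ℝ → ℝ} (hv : ContinuousOn v Ucl) {R : ℝ} (hR : 0 < R) :
    ∃ M : ℝ, 0 ≤ M ∧ ∀ x t : ℝ, x ∈ Set.Icc (0:ℝ) (2*π) → t ∈ Set.Icc (0:ℝ) R →
      |v (x, t)| ≤ M := by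
  have hKsub : (Set.Icc ((0:ℝ), (0:ℝ)) ((2*π : ℝ), R) : Set (ℝ × ℝ)) ⊆ Ucl := fun p hp =>
    show (0:ℝ) ≤ p.2 from hp.1.2
  obtain ⟨M, hM⟩ := isCompact_Icc.exists_bound_of_continuousOn (hv.mono hKsub)
  refine ⟨M, ?_, ?_⟩
  · refine le_trans (norm_nonneg (v ((0:ℝ), (0:ℝ)))) (hM _ ?_)
    exact ⟨⟨le_rfl, le_rfl⟩, ⟨by positivity, hR.le⟩⟩
  · intro x t hx ht
    exact hM ((x, t) : ℝ × ℝ) ⟨⟨hx.1, ht.1⟩, ⟨hx.2, ht.2⟩⟩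

lemma phif_tendsto (hcont : ContinuousOn u Ucl) (hψC1 : ContDiffOn ℝ 1 ψ Ucl)
    (hbdry : ∀ x : ℝ, u (x, 0) = 0) {R : ℝ} (hR : 0 < R) :
    Filter.Tendsto (phif u ψ) (nhdsWithin 0 (Set.Ioi 0)) (nhds 0) := by
  obtain ⟨Mu, hMu0, hMu⟩ := Kbounds hcont hR
  obtain ⟨Mp, hMp0, hMp⟩ := Kbounds hψC1.continuousOn hR
  have key := tendsto_integral_filter_of_dominated_convergence
    (μ := (volume : Measure ℝ).restrict (Set.Icc (0:ℝ) (2*π)))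
    (l := nhdsWithin 0 (Set.Ioi 0))
    (F := fun t x => (u (x, t) * u (x, t)) * (ψ (x, t) * ψ (x, t)))
    (f := fun _ => (0:ℝ))
    (fun _ => Mu * Mu * (Mp * Mp))
    (by
      filter_upwards [self_mem_nhdsWithin] with t ht
      exact ((((sliceCont hcont (le_of_lt ht)).mul (sliceCont hcont (le_of_lt ht))).mul
        ((sliceCont hψC1.continuousOn (le_of_lt ht)).mul
          (sliceCont hψC1.continuousOn (le_of_lt ht)))).aestronglyMeasurable))
    (by
      filter_upwards [Ioc_mem_nhdsGT hR] with t ht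
      rw [ae_restrict_iff' measurableSet_Icc]
      filter_upwards with x hx
      have h1 := hMu x t hx ⟨ht.1.le, ht.2⟩
      have h2 := hMp x t hx ⟨ht.1.le, ht.2⟩
      have : ‖(u (x, t) * u (x, t)) * (ψ (x, t) * ψ (x, t))‖ =
          (|u (x, t)| * |u (x, t)|) * (|ψ (x, t)| * |ψ (x, t)|) := by
        rw [Real.norm_eq_abs, abs_mul, abs_mul, abs_mul]
      rw [this]
      have hA : |u (x,t)| * |u (x,t)| ≤ Mu * Mu := mul_le_mul h1 h1 (abs_nonneg _) hMu0
      have hB : |ψ (x,t)| * |ψ (x,t)| ≤ Mp * Mp := mul_le_mul h2 h2 (abs_nonneg _) hMp0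
      exact mul_le_mul hA hB (by positivity) (by positivity))
    ((integrableOn_const_iff (C := Mu * Mu * (Mp * Mp))).mpr (Or.inr measure_Icc_lt_top))
    (by
      filter_upwards with x
      have hu0 : Filter.Tendsto (fun t => u (x, t)) (nhdsWithin 0 (Set.Ioi 0)) (nhds 0) := by
        have := sliceTendsto (v := u) hcont x
        rwa [hbdry x] at this
      have hψt := sliceTendsto (v := ψ) hψC1.continuousOn x
      have := (hu0.mul hu0).mul (hψt.mul hψt)
      simpa using this)
  unfold phif
  simpa using key

lemma KKcontUcl (hcont : ContinuousOn u Ucl) (hψC1 : ContDiffOn ℝ 1 ψ Ucl) :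
    ContinuousOn (KK u ψ) Ucl :=
  (hcont.mul hcont).mul
    (((hψC1.continuousOn.mul (b2_continuousOn hψC1))).add
      ((hψC1.continuousOn.mul (b2_continuousOn hψC1))))

lemma kfun_tendsto (hcont : ContinuousOn u Ucl) (hψC1 : ContDiffOn ℝ 1 ψ Ucl)
    (hbdry : ∀ x : ℝ, u (x, 0) = 0) {R : ℝ} (hR : 0 < R) :
    Filter.Tendsto (kfun u ψ) (nhdsWithin 0 (Set.Ioi 0)) (nhds 0) := by
  obtain ⟨Mu, hMu0, hMu⟩ := Kbounds hcont hR
  obtain ⟨Mp, hMp0, hMp⟩ := Kbounds hψC1.continuousOn hR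
  obtain ⟨Mq, hMq0, hMq⟩ := Kbounds (b2_continuousOn hψC1) hR
  have key := tendsto_integral_filter_of_dominated_convergence
    (μ := (volume : Measure ℝ).restrict (Set.Icc (0:ℝ) (2*π)))
    (l := nhdsWithin 0 (Set.Ioi 0))
    (F := fun t x => KK u ψ (x, t))
    (f := fun _ => (0:ℝ))
    (fun _ => Mu * Mu * (Mp * Mq + Mp * Mq))
    (by
      filter_upwards [self_mem_nhdsWithin] with t ht
      exact (sliceCont (KKcontUcl hcont hψC1) (le_of_lt ht)).aestronglyMeasurable)
    (by
      filter_upwards [Ioc_mem_nhdsGT hR] with t ht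
      rw [ae_restrict_iff' measurableSet_Icc]
      filter_upwards with x hx
      have h1 := hMu x t hx ⟨ht.1.le, ht.2⟩
      have h2 := hMp x t hx ⟨ht.1.le, ht.2⟩
      have h3 := hMq x t hx ⟨ht.1.le, ht.2⟩
      have ha := abs_nonneg (u (x, t))
      have hb := abs_nonneg (ψ (x, t))
      have hc := abs_nonneg (b2 ψ (x, t))
      have habs : ‖KK u ψ (x, t)‖ ≤ (|u (x,t)| * |u (x,t)|) * (|ψ (x,t)| * |b2 ψ (x,t)| + |ψ (x,t)| * |b2 ψ (x,t)|) := by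
        rw [Real.norm_eq_abs, KK, abs_mul, abs_mul]
        have := abs_add_le (ψ (x,t) * b2 ψ (x,t)) (ψ (x,t) * b2 ψ (x,t))
        rw [abs_mul] at this
        nlinarith [abs_nonneg (ψ (x,t) * b2 ψ (x,t) + ψ (x,t) * b2 ψ (x,t))]
      refine le_trans habs ?_
      have hA : |u (x,t)| * |u (x,t)| ≤ Mu * Mu := mul_le_mul h1 h1 (abs_nonneg _) hMu0
      have hC : |ψ (x,t)| * |b2 ψ (x,t)| ≤ Mp * Mq := mul_le_mul h2 h3 (abs_nonneg _) hMp0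
      exact mul_le_mul hA (add_le_add hC hC) (by positivity) (by positivity))
    ((integrableOn_const_iff (C := Mu * Mu * (Mp * Mq + Mp * Mq))).mpr (Or.inr measure_Icc_lt_top))
    (by
      filter_upwards with x
      have hu0 : Filter.Tendsto (fun t => u (x, t)) (nhdsWithin 0 (Set.Ioi 0)) (nhds 0) := by
        have := sliceTendsto (v := u) hcont x
        rwa [hbdry x] at this
      have hψt := sliceTendsto (v := ψ) hψC1.continuousOn x
      have hb2t := sliceTendsto (v := b2 ψ) (b2_continuousOn hψC1) x
      have := (hu0.mul hu0).mul ((hψt.mul hb2t).add (hψt.mul hb2t))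
      simp only [KK]
      simpa using this)
  unfold kfun
  simpa using key

lemma Ffun_split (hC2 : ContDiffOn ℝ 2 u Uo) (hψC1 : ContDiffOn ℝ 1 ψ Ucl)
    {t : ℝ} (ht : 0 < t) :  Ffun u ψ t = kfun u ψ t + 2 * Bfun u ψ t := by
  have hKK : IntegrableOn (fun x => KK u ψ (x, t)) (Set.Icc (0:ℝ) (2*π)) volume :=
    (sliceContUo ((((ucont hC2).mul (ucont hC2)).mul
      (((psicont hψC1).mul (b2cont hψC1)).add ((psicont hψC1).mul (b2cont hψC1))))) ht
      ).integrableOn_Icc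
  have hGG : IntegrableOn (fun x => GG u ψ (x, t)) (Set.Icc (0:ℝ) (2*π)) volume :=
    (sliceContUo (((ucont hC2).mul ((psicont hψC1).mul (psicont hψC1))).mul
      (a2cont hC2)) ht).integrableOn_Icc
  have heq : ∀ x ∈ Set.Icc (0:ℝ) (2*π),
      HH u ψ (x, t) = KK u ψ (x, t) + 2 * GG u ψ (x, t) := by
    intro x _
    simp only [HH, KK, GG]
    ring
  rw [Ffun, setIntegral_congr_fun measurableSet_Icc heq,
    integral_add hKK (hGG.const_mul 2), integral_const_mul]
  rfl

lemma claimA (hC2 : ContDiffOn ℝ 2 u Uo) (hψC1 : ContDiffOn ℝ 1 ψ Ucl)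
    (hcont : ContinuousOn u Ucl) (hbdry : ∀ x : ℝ, u (x, 0) = 0)
    {R : ℝ} (hR : 0 < R) :
    ∀ δ > 0, ∃ ε ∈ Set.Ioo (0:ℝ) (min δ R), -δ ≤ Ffun u ψ ε := by
  intro δ hδ
  by_contra hcon
  push_neg at hcon
  set d := min δ R with hd
  have hd0 : 0 < d := lt_min hδ hR
  have hineq : ∀ ε ∈ Set.Ioo (0:ℝ) d, phif u ψ d - phif u ψ ε ≤ -δ * (d - ε) := by
    intro ε hε
    have h1 : phif u ψ d - phif u ψ ε =
        ∫ y in Set.Icc ε d, Ffun u ψ y := by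
      rw [← div2 hC2 hψC1 hε.1 hε.2, fub hC2 hψC1 hε.1]
    have h2 : ∫ y in Set.Icc ε d, Ffun u ψ y = ∫ y in Set.Ico ε d, Ffun u ψ y :=
      setIntegral_congr_set Ico_ae_eq_Icc.symm
    have h3 : ∫ y in Set.Ico ε d, Ffun u ψ y ≤ ∫ _ in Set.Ico ε d, (-δ) := by
      apply setIntegral_mono_on
        ((FfunIntegrable hC2 hψC1 hε.1).mono_set Set.Ico_subset_Icc_self)
        ((integrableOn_const_iff (C := -δ)).mpr (Or.inr measure_Ico_lt_top))
        measurableSet_Ico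
      intro y hy
      exact le_of_lt (hcon y ⟨lt_of_lt_of_le hε.1 hy.1, hy.2⟩)
    have h4 : ∫ _ in Set.Ico ε d, (-δ) = -δ * (d - ε) := by
      rw [setIntegral_const, Real.volume_real_Ico_of_le (by linarith [hε.2] : ε ≤ d), smul_eq_mul,
        mul_comm]
    linarith [h1, h2.le, h3, h4.le, h4.ge]
  have hlim1 : Filter.Tendsto (fun ε => phif u ψ d - phif u ψ ε)
      (nhdsWithin 0 (Set.Ioi 0)) (nhds (phif u ψ d - 0)) :=
    tendsto_const_nhds.sub (phif_tendsto hcont hψC1 hbdry hR)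
  have hlim2 : Filter.Tendsto (fun ε : ℝ => -δ * (d - ε))
      (nhdsWithin 0 (Set.Ioi 0)) (nhds (-δ * (d - 0))) :=
    (((continuous_const.mul (continuous_const.sub continuous_id)).tendsto 0).mono_left
      nhdsWithin_le_nhds)
  have hfin : phif u ψ d - 0 ≤ -δ * (d - 0) := by
    refine le_of_tendsto_of_tendsto hlim1 hlim2 ?_
    filter_upwards [Ioo_mem_nhdsGT hd0] with ε hε
    exact hineq ε hε
  have := phif_nonneg (u := u) (ψ := ψ) d
  simp only [sub_zero] at hfin
  nlinarith

lemma claimB (hC2 : ContDiffOn ℝ 2 u Uo) (hψC1 : ContDiffOn ℝ 1 ψ Ucl)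
    (hcont : ContinuousOn u Ucl) (hbdry : ∀ x : ℝ, u (x, 0) = 0)
    {R : ℝ} (hR : 0 < R) :
    ∀ δ > 0, ∃ ε ∈ Set.Ioo (0:ℝ) (min δ R), -(2 * Bfun u ψ ε) ≤ 2 * δ := by
  intro δ hδ
  have hk := kfun_tendsto hcont hψC1 hbdry hR
  have hball : (kfun u ψ) ⁻¹' (Metric.ball 0 δ) ∈ nhdsWithin (0:ℝ) (Set.Ioi 0) :=
    hk (Metric.ball_mem_nhds (0:ℝ) hδ)
  rw [mem_nhdsGT_iff_exists_Ioo_subset] at hball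
  obtain ⟨a, ha, hsub⟩ := hball
  have ha0 : 0 < a := ha
  set δ' := min δ a with hδ'
  have hδ'0 : 0 < δ' := lt_min hδ ha0
  obtain ⟨ε, hεmem, hεF⟩ := claimA hC2 hψC1 hcont hbdry hR δ' hδ'0
  have hε0 : 0 < ε := hεmem.1
  have hεa : ε < a := lt_of_lt_of_le hεmem.2 (le_trans (min_le_left _ _) (min_le_right _ _))
  have hkε : |kfun u ψ ε| < δ := by
    have : ε ∈ Set.Ioo (0:ℝ) a := ⟨hε0, hεa⟩
    have := hsub this
    simpa [Real.dist_eq] using this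
  have hsplit := Ffun_split hC2 hψC1 hε0
  refine ⟨ε, ⟨hε0, lt_of_lt_of_le hεmem.2 (min_le_min (min_le_left _ _) le_rfl)⟩, ?_⟩
  have h1 : -δ' ≤ kfun u ψ ε + 2 * Bfun u ψ ε := by rw [← hsplit]; exact hεF
  have h2 : δ' ≤ δ := min_le_left _ _
  have h3 := abs_lt.mp hkε
  linarith

noncomputable def Dint (u ψ : ℝ × ℝ → ℝ) (R : ℝ) : ℝ :=
  ∫ p in Set.Icc ((0:ℝ), (0:ℝ)) ((2*π : ℝ), R), WW u ψ p

lemma WW_nonneg (p : ℝ × ℝ) : 0 ≤ WW u ψ p :=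
  mul_nonneg (mul_self_nonneg _) (add_nonneg (mul_self_nonneg _) (mul_self_nonneg _))

lemma PP_nonneg (p : ℝ × ℝ) : 0 ≤ PP u ψ p :=
  mul_nonneg (mul_self_nonneg _) (add_nonneg (mul_self_nonneg _) (mul_self_nonneg _))

lemma WWint (hψC1 : ContDiffOn ℝ 1 ψ Ucl) (hcont : ContinuousOn u Ucl) {R : ℝ} :
    IntegrableOn (WW u ψ) (Set.Icc ((0:ℝ), (0:ℝ)) ((2*π : ℝ), R)) volume := by
  have hsub : (Set.Icc ((0:ℝ), (0:ℝ)) ((2*π : ℝ), R) : Set (ℝ × ℝ)) ⊆ Ucl := fun p hp =>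
    show (0:ℝ) ≤ p.2 from hp.1.2
  exact ((WWcontUcl hψC1 hcont).mono hsub).integrableOn_compact isCompact_Icc

lemma main_est (hC2 : ContDiffOn ℝ 2 u Uo) (hper : ∀ x y : ℝ, u (x + 2 * π, y) = u (x, y))
    (hharm : ∀ p : ℝ × ℝ, 0 < p.2 → pXX u p + pYY u p = 0)
    (hψC1 : ContDiffOn ℝ 1 ψ Ucl) (hψper : ∀ x y : ℝ, ψ (x + 2 * π, y) = ψ (x, y))
    (hcont : ContinuousOn u Ucl) {R : ℝ}
    (hψ0 : ∀ p : ℝ × ℝ, R ≤ p.2 → ψ p = 0) {ε : ℝ} (hε : 0 < ε) (hεR : ε < R) :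
    ∫ p in Set.Icc ((0:ℝ), ε) ((2*π : ℝ), R), PP u ψ p ≤
      -(2 * Bfun u ψ ε) + 4 * Dint u ψ R := by
  have hsubbox := box_subset_Uo (R := R) hε
  have hPint : IntegrableOn (PP u ψ) (Set.Icc ((0:ℝ), ε) ((2*π : ℝ), R)) volume :=
    (((PPcont hC2 hψC1).mono hsubbox)).integrableOn_compact isCompact_Icc
  have hPQint : IntegrableOn (fun p => PP u ψ p + QQ u ψ p)
      (Set.Icc ((0:ℝ), ε) ((2*π : ℝ), R)) volume :=
    ((((PPcont hC2 hψC1).add (QQcont hC2 hψC1)).mono hsubbox)).integrableOn_compact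
      isCompact_Icc
  have hWint0 := WWint (u := u) (ψ := ψ) hψC1 hcont (R := R)
  have hboxsub : Set.Icc ((0:ℝ), ε) ((2*π : ℝ), R) ⊆ Set.Icc ((0:ℝ), (0:ℝ)) ((2*π : ℝ), R) :=
    Set.Icc_subset_Icc (Prod.mk_le_mk.mpr ⟨le_rfl, hε.le⟩) le_rfl
  have hWintε : IntegrableOn (WW u ψ) (Set.Icc ((0:ℝ), ε) ((2*π : ℝ), R)) volume :=
    hWint0.mono_set hboxsub
  have step1 : ∫ p in Set.Icc ((0:ℝ), ε) ((2*π : ℝ), R), PP u ψ p ≤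
      ∫ p in Set.Icc ((0:ℝ), ε) ((2*π : ℝ), R),
        (2 * (PP u ψ p + QQ u ψ p) + 4 * WW u ψ p) := by
    apply setIntegral_mono_on hPint
      (((hPQint.const_mul 2).add (hWintε.const_mul 4)) :
        IntegrableOn (fun p => 2 * (PP u ψ p + QQ u ψ p) + 4 * WW u ψ p) _ volume)
      measurableSet_Icc
    intro p _
    show PP u ψ p ≤ 2 * (PP u ψ p + QQ u ψ p) + 4 * WW u ψ p
    simp only [PP, QQ, WW]
    nlinarith [sq_nonneg (ψ p * a1 u p + 2 * (u p * b1 ψ p)),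
      sq_nonneg (ψ p * a2 u p + 2 * (u p * b2 ψ p))]
  have step2 : ∫ p in Set.Icc ((0:ℝ), ε) ((2*π : ℝ), R),
      (2 * (PP u ψ p + QQ u ψ p) + 4 * WW u ψ p) =
      2 * (∫ p in Set.Icc ((0:ℝ), ε) ((2*π : ℝ), R), (PP u ψ p + QQ u ψ p)) +
      4 * ∫ p in Set.Icc ((0:ℝ), ε) ((2*π : ℝ), R), WW u ψ p := by
    rw [integral_add (hPQint.const_mul 2) (hWintε.const_mul 4), integral_const_mul,
      integral_const_mul]
  have step3 := div1 hC2 hper hharm hψC1 hψper hψ0 hε hεR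
  have step4 : ∫ p in Set.Icc ((0:ℝ), ε) ((2*π : ℝ), R), WW u ψ p ≤ Dint u ψ R := by
    apply setIntegral_mono_set hWint0
      (Filter.Eventually.of_forall fun p => WW_nonneg p)
      (HasSubset.Subset.eventuallyLE hboxsub)
  rw [step2, step3] at step1
  have : 2 * -Bfun u ψ ε = -(2 * Bfun u ψ ε) := by ring
  linarith [step1, step4]

end main

end S9aux

open S9aux

/-- Caccioppoli-type inequality on the half-cylinder. -/
theorem statement9 (u ψ : ℝ × ℝ → ℝ)
    (hcont : ContinuousOn u {p : ℝ × ℝ | 0 ≤ p.2})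
    (hper : ∀ x y : ℝ, u (x + 2 * π, y) = u (x, y))
    (hC2 : ContDiffOn ℝ 2 u {p : ℝ × ℝ | 0 < p.2})
    (hharm : ∀ p : ℝ × ℝ, 0 < p.2 → pXX u p + pYY u p = 0)
    (hbdry : ∀ x : ℝ, u (x, 0) = 0)
    (hψC1 : ContDiffOn ℝ 1 ψ {p : ℝ × ℝ | 0 ≤ p.2})
    (hψper : ∀ x y : ℝ, ψ (x + 2 * π, y) = ψ (x, y))
    (R : ℝ) (hR : 0 < R)
    (hψ0 : ∀ p : ℝ × ℝ, R ≤ p.2 → ψ p = 0) :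
    ∫⁻ p in Set.Ioo (0 : ℝ) (2 * π) ×ˢ Set.Ioi (0 : ℝ),
        ENNReal.ofReal ((pX u p ^ 2 + pY u p ^ 2) * ψ p ^ 2)
      ≤ 4 * ∫⁻ p in Set.Ioo (0 : ℝ) (2 * π) ×ˢ Set.Ioi (0 : ℝ),
        ENNReal.ofReal ((pX ψ p ^ 2 + pY ψ p ^ 2) * u p ^ 2) := by

  classical
  have hC2' : ContDiffOn ℝ 2 u Uo := hC2
  have hψC1' : ContDiffOn ℝ 1 ψ Ucl := hψC1
  have hcont' : ContinuousOn u Ucl := hcont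
  set S : Set (ℝ × ℝ) := Set.Ioo (0:ℝ) (2*π) ×ˢ Set.Ioi (0:ℝ) with hS
  set T : Set (ℝ × ℝ) := Set.Ioo (0:ℝ) (2*π) ×ˢ Set.Ioo (0:ℝ) R with hT
  have hTmeas : MeasurableSet T := measurableSet_Ioo.prod measurableSet_Ioo
  have hTsubUo : T ⊆ Uo := fun p hp => hp.2.1
  -- split off the part above R, where ψ vanishes
  have hsplit : ∫⁻ p in S, ENNReal.ofReal ((pX u p ^ 2 + pY u p ^ 2) * ψ p ^ 2) =
      ∫⁻ p in T, ENNReal.ofReal ((pX u p ^ 2 + pY u p ^ 2) * ψ p ^ 2) := by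
    have hdisj : Disjoint T (Set.Ioo (0:ℝ) (2*π) ×ˢ Set.Ici R) := by
      rw [hT]
      refine Set.Disjoint.set_prod_right ?_ _ _
      exact Set.disjoint_left.mpr fun y hy hy' => absurd hy.2 (not_lt.mpr hy')
    have hU : S = T ∪ (Set.Ioo (0:ℝ) (2*π) ×ˢ Set.Ici R) := by
      rw [hS, hT, ← Set.prod_union, Set.Ioo_union_Ici_eq_Ioi hR]
    have hzero : ∫⁻ p in Set.Ioo (0:ℝ) (2*π) ×ˢ Set.Ici R,
        ENNReal.ofReal ((pX u p ^ 2 + pY u p ^ 2) * ψ p ^ 2) = 0 := by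
      rw [setLIntegral_congr_fun (measurableSet_Ioo.prod measurableSet_Ici)
        ((fun p (hp : p ∈ _ ×ˢ _) => by
          rw [hψ0 p hp.2]
          norm_num : ∀ p ∈ Set.Ioo (0:ℝ) (2*π) ×ˢ Set.Ici R,
            ENNReal.ofReal ((pX u p ^ 2 + pY u p ^ 2) * ψ p ^ 2) = (fun _ => 0) p))]
      simp
    rw [hU, lintegral_union (measurableSet_Ioo.prod measurableSet_Ici) hdisj, hzero, add_zero]
  have hcongrT : ∫⁻ p in T, ENNReal.ofReal ((pX u p ^ 2 + pY u p ^ 2) * ψ p ^ 2) =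
      ∫⁻ p in T, ENNReal.ofReal (PP u ψ p) := by
    apply setLIntegral_congr_fun hTmeas
    intro p hp
    have hpU := hTsubUo hp
    beta_reduce
    rw [pX_eq hC2' hpU, pY_eq hC2' hpU]
    congr 1
    simp only [PP]
    ring
  -- exhaustion by boxes staying away from the boundary
  set Tn : ℕ → Set (ℝ × ℝ) := fun n => Set.Ioo (0:ℝ) (2*π) ×ˢ Set.Ioo (R/(n+2)) R with hTn
  have hTnmeas : ∀ n, MeasurableSet (Tn n) := fun n => measurableSet_Ioo.prod measurableSet_Ioo
  have hTnsubT : ∀ n, Tn n ⊆ T := fun n =>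
    Set.prod_mono subset_rfl (Set.Ioo_subset_Ioo (by positivity) le_rfl)
  have hTnmono : ∀ m n : ℕ, m ≤ n → Tn m ⊆ Tn n := by
    intro m n hmn
    have hdivle : R/((n:ℝ)+2) ≤ R/((m:ℝ)+2) := by
      apply div_le_div_of_nonneg_left hR.le (by positivity)
      have := (Nat.cast_le (α := ℝ)).mpr hmn
      linarith
    exact Set.prod_mono subset_rfl (Set.Ioo_subset_Ioo hdivle le_rfl)
  have hTnunion : (⋃ n, Tn n) = T := by
    ext p
    simp only [Set.mem_iUnion, hTn, hT, Set.mem_prod, Set.mem_Ioo]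
    constructor
    · rintro ⟨n, hx, hy1, hy2⟩
      exact ⟨hx, lt_trans (by positivity) hy1, hy2⟩
    · rintro ⟨hx, hy1, hy2⟩
      obtain ⟨n, hn⟩ := exists_nat_gt (R / p.2)
      refine ⟨n, hx, ?_, hy2⟩
      rw [div_lt_iff₀ (by positivity)]
      have h1 : R < (n:ℝ) * p.2 := by
        have := (div_lt_iff₀ hy1).mp hn
        linarith
      nlinarith
  set f : (ℝ × ℝ) → ENNReal := fun p => ENNReal.ofReal (PP u ψ p) with hf
  have hfmeasn : ∀ n, AEMeasurable ((Tn n).indicator f) volume := by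
    intro n
    rw [aemeasurable_indicator_iff (hTnmeas n)]
    exact (((PPcont hC2' hψC1').mono
      (fun p hp => hTsubUo (hTnsubT n hp))).aemeasurable (hTnmeas n)).ennreal_ofReal
  have hmono : ∀ᵐ p ∂(volume : Measure (ℝ × ℝ)), Monotone fun n => (Tn n).indicator f p := by
    apply ae_of_all
    intro p
    apply monotone_nat_of_le_succ
    intro n
    by_cases hp : p ∈ Tn n
    · rw [Set.indicator_of_mem hp, Set.indicator_of_mem (hTnmono n (n+1) (by omega) hp)]
    · rw [Set.indicator_of_notMem hp]
      exact zero_le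
  have hindsup : (fun p => ⨆ n, (Tn n).indicator f p) = T.indicator f := by
    funext p
    by_cases hp : p ∈ T
    · rw [Set.indicator_of_mem hp]
      have hex : ∃ n, p ∈ Tn n := Set.mem_iUnion.mp (hTnunion ▸ hp)
      obtain ⟨N, hN⟩ := hex
      apply le_antisymm
      · apply iSup_le
        intro n
        by_cases hpn : p ∈ Tn n
        · rw [Set.indicator_of_mem hpn]
        · rw [Set.indicator_of_notMem hpn]
          exact zero_le
      · exact le_iSup_of_le N (by rw [Set.indicator_of_mem hN])
    · rw [Set.indicator_of_notMem hp]
      refine le_antisymm (iSup_le fun n => ?_) (zero_le)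
      rw [Set.indicator_of_notMem (fun hpn => hp (hTnsubT n hpn))]
  have hsupeq : ∫⁻ p in T, f p = ⨆ n, ∫⁻ p in Tn n, f p := by
    rw [← lintegral_indicator hTmeas, ← hindsup, lintegral_iSup' hfmeasn hmono]
    congr 1
    funext n
    rw [lintegral_indicator (hTnmeas n)]
  set D : ℝ := Dint u ψ R with hD
  have hn_bound : ∀ n, ∫⁻ p in Tn n, f p ≤ ENNReal.ofReal (4 * D) := by
    intro n
    apply ENNReal.le_of_forall_pos_le_add
    intro η hη _
    have hηR : (0:ℝ) < (η:ℝ) := hη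
    have hδ : (0:ℝ) < (η:ℝ)/2 := by positivity
    have hδ0' : 0 < min ((η:ℝ)/2) (R/((n:ℝ)+2)) := lt_min hδ (by positivity)
    obtain ⟨ε, hεmem, hB⟩ := claimB hC2' hψC1' hcont' hbdry hR _ hδ0'
    have hε0 : 0 < ε := hεmem.1
    have hεR : ε < R := lt_of_lt_of_le hεmem.2 (min_le_right _ _)
    have hεn : ε ≤ R/((n:ℝ)+2) :=
      le_of_lt (lt_of_lt_of_le hεmem.2 (le_trans (min_le_left _ _) (min_le_right _ _)))
    have hPint : IntegrableOn (PP u ψ) (Set.Icc ((0:ℝ), ε) ((2*π:ℝ), R)) volume :=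
      ((PPcont hC2' hψC1').mono (box_subset_Uo hε0)).integrableOn_compact isCompact_Icc
    have hsub : Tn n ⊆ Set.Icc ((0:ℝ), ε) ((2*π:ℝ), R) := by
      rw [Set.Icc_prod_eq]
      apply Set.prod_mono
      · exact Set.Ioo_subset_Icc_self
      · intro y hy
        exact ⟨le_trans hεn hy.1.le, hy.2.le⟩
    calc ∫⁻ p in Tn n, f p ≤ ∫⁻ p in Set.Icc ((0:ℝ), ε) ((2*π:ℝ), R), f p :=
        lintegral_mono_set hsub
      _ = ENNReal.ofReal (∫ p in Set.Icc ((0:ℝ), ε) ((2*π:ℝ), R), PP u ψ p) :=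
        (ofReal_integral_eq_lintegral_ofReal hPint
          (Filter.Eventually.of_forall fun p => PP_nonneg p)).symm
      _ ≤ ENNReal.ofReal (-(2 * Bfun u ψ ε) + 4 * D) :=
        ENNReal.ofReal_le_ofReal
          (main_est hC2' hper hharm hψC1' hψper hcont' hψ0 hε0 hεR)
      _ ≤ ENNReal.ofReal (4 * D + (η:ℝ)) := by
        apply ENNReal.ofReal_le_ofReal
        have h3 : 2 * min ((η:ℝ)/2) (R/((n:ℝ)+2)) ≤ (η:ℝ) := by
          have := min_le_left ((η:ℝ)/2) (R/((n:ℝ)+2))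
          linarith
        linarith [hB]
      _ ≤ ENNReal.ofReal (4 * D) + ENNReal.ofReal ((η:ℝ)) := ENNReal.ofReal_add_le
      _ = ENNReal.ofReal (4 * D) + η := by rw [ENNReal.ofReal_coe_nnreal]
  -- lower bound for the right-hand side
  have hWsubT : T ⊆ Set.Icc ((0:ℝ), (0:ℝ)) ((2*π:ℝ), R) := by
    rw [Set.Icc_prod_eq, hT]
    exact Set.prod_mono Set.Ioo_subset_Icc_self Set.Ioo_subset_Icc_self
  have hWintT : IntegrableOn (WW u ψ) T volume := (WWint hψC1' hcont').mono_set hWsubT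
  have hDT : D = ∫ p in T, WW u ψ p := by
    rw [hD, Dint, Set.Icc_prod_eq, setIntegral_congr_set (box_ae 0 (2*π) 0 R)]
  have hRHSge : ENNReal.ofReal D ≤
      ∫⁻ p in S, ENNReal.ofReal ((pX ψ p ^ 2 + pY ψ p ^ 2) * u p ^ 2) := by
    have h1 : ENNReal.ofReal D = ∫⁻ p in T, ENNReal.ofReal (WW u ψ p) := by
      rw [hDT]
      exact ofReal_integral_eq_lintegral_ofReal hWintT
        (Filter.Eventually.of_forall fun p => WW_nonneg p)
    have h2 : ∫⁻ p in T, ENNReal.ofReal (WW u ψ p) =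
        ∫⁻ p in T, ENNReal.ofReal ((pX ψ p ^ 2 + pY ψ p ^ 2) * u p ^ 2) := by
      apply setLIntegral_congr_fun hTmeas
      intro p hp
      have hpU := hTsubUo hp
      beta_reduce
      rw [pXpsi_eq hψC1' hpU, pYpsi_eq hψC1' hpU]
      congr 1
      simp only [WW]
      ring
    have h3 : ∫⁻ p in T, ENNReal.ofReal ((pX ψ p ^ 2 + pY ψ p ^ 2) * u p ^ 2) ≤
        ∫⁻ p in S, ENNReal.ofReal ((pX ψ p ^ 2 + pY ψ p ^ 2) * u p ^ 2) := by
      apply lintegral_mono_set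
      rw [hT, hS]
      exact Set.prod_mono subset_rfl Set.Ioo_subset_Ioi_self
    rw [h1, h2]
    exact h3
  calc ∫⁻ p in S, ENNReal.ofReal ((pX u p ^ 2 + pY u p ^ 2) * ψ p ^ 2)
      = ∫⁻ p in T, f p := by rw [hsplit, hcongrT]
    _ = ⨆ n, ∫⁻ p in Tn n, f p := hsupeq
    _ ≤ ENNReal.ofReal (4 * D) := iSup_le hn_bound
    _ = 4 * ENNReal.ofReal D := by
        rw [ENNReal.ofReal_mul (by norm_num : (0:ℝ) ≤ 4)]
        norm_num
    _ ≤ 4 * ∫⁻ p in S, ENNReal.ofReal ((pX ψ p ^ 2 + pY ψ p ^ 2) * u p ^ 2) :=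
        mul_le_mul_right hRHSge 4
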